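/- arXiv:2412.11508 — 2 statements merged into one kernel-verified Lean document; each statement's English description precedes it below -/
import Mathlib

section
/- The pair (α_n, β_n) with α_0 = 1, α_n = q^{n^2+n}(1-q^{2n+2})/(1-q^2) for n ≥ 1 (equivalently α_n = q^{n^2+n}(1-q^{2n+2})/(1-q^2) for all n ≥ 0), and β_n = 1/((q;q)_n (q^2;q)_n), is a Bailey pair relative to q^2: β_n = ∑_{r=0}^n α_r / ((q;q)_{n-r} (q^3;q)_{n+r}). -/
set_option maxHeartbeats 1000000


open scoped BigOperators

noncomputable def qPoch (a q : ℂ) (n : ℕ) : ℂ := ∏ j ∈ Finset.range n, (1 - a * q ^ j)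

noncomputable def qPochInf (a q : ℂ) : ℂ := ∏' j : ℕ, (1 - a * q ^ j)

lemma qPoch_succ (a q : ℂ) (n : ℕ) : qPoch a q (n + 1) = qPoch a q n * (1 - a * q ^ n) :=
  Finset.prod_range_succ _ _

lemma qPoch_shift (q : ℂ) (n : ℕ) : qPoch (q ^ 2) q (n + 1) = (1 - q ^ 2) * qPoch (q ^ 3) q n := by
  simp only [qPoch, Finset.prod_range_succ']
  rw [pow_zero, mul_one, mul_comm]
  congr 1
  exact Finset.prod_congr rfl fun i _ => by ring

lemma one_sub_ne (q : ℂ) (hq : ∀ k : ℕ, q ^ (k + 1) ≠ 1) (k : ℕ) : (1 : ℂ) - q ^ (k + 1) ≠ 0 :=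
  sub_ne_zero.mpr fun h => hq k h.symm

lemma qPoch_q_ne (q : ℂ) (hq : ∀ k : ℕ, q ^ (k + 1) ≠ 1) (n : ℕ) : qPoch q q n ≠ 0 := by
  unfold qPoch
  rw [Finset.prod_ne_zero_iff]
  intro i _
  have h : (1 : ℂ) - q * q ^ i = 1 - q ^ (i + 1) := by ring
  rw [h]; exact one_sub_ne q hq i

lemma qPoch_q3_ne (q : ℂ) (hq : ∀ k : ℕ, q ^ (k + 1) ≠ 1) (n : ℕ) : qPoch (q ^ 3) q n ≠ 0 := by
  unfold qPoch
  rw [Finset.prod_ne_zero_iff]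
  intro i _
  have h : (1 : ℂ) - q ^ 3 * q ^ i = 1 - q ^ (i + 2 + 1) := by ring
  rw [h]; exact one_sub_ne q hq (i + 2)

lemma cert (A B D U V c w : ℂ) (hA : A ≠ 0) (hB : B ≠ 0) (hD : D ≠ 0)
    (hU : U ≠ 0) (hV : V ≠ 0) (hrel : V = (1 - w) + w * U) :
    c / (D * (A * U) * B)
      = (c * (1 - w) / D) / (A * U * (B * V))
        + c * w / (D * A * (B * V)) := by
  have h1 : D * (A * U * (B * V)) ≠ 0 :=
    mul_ne_zero hD (mul_ne_zero (mul_ne_zero hA hU) (mul_ne_zero hB hV))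
  have h2 : D * A * (B * V) ≠ 0 :=
    mul_ne_zero (mul_ne_zero hD hA) (mul_ne_zero hB hV)
  have h0 : D * (A * U) * B ≠ 0 :=
    mul_ne_zero (mul_ne_zero hD (mul_ne_zero hA hU)) hB
  rw [div_div, div_add_div _ _ h1 h2, div_eq_div_iff h0 (mul_ne_zero h1 h2), hrel]
  ring

theorem stmt14 (q : ℂ) (hq : ∀ k : ℕ, q ^ (k + 1) ≠ 1) (n : ℕ) :
    (1 : ℂ) / (qPoch q q n * qPoch (q ^ 2) q n)
      = ∑ r ∈ Finset.range (n + 1),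
          (q ^ (r ^ 2 + r) * (1 - q ^ (2 * r + 2)) / (1 - q ^ 2)) /
            (qPoch q q (n - r) * qPoch (q ^ 3) q (n + r)) := by
  have h2 : (1 : ℂ) - q ^ 2 ≠ 0 := one_sub_ne q hq 1
  obtain _ | N := n
  · simp only [Finset.sum_range_one, qPoch, Finset.range_zero, Finset.prod_empty, mul_one]
    norm_num
    rw [div_self h2]
  · have key : ∀ m, m ≤ N →
        (1 : ℂ) / (qPoch q q (N + 1) * qPoch (q ^ 2) q (N + 1))
          = (∑ r ∈ Finset.range (m + 1),
              (q ^ (r ^ 2 + r) * (1 - q ^ (2 * r + 2)) / (1 - q ^ 2)) /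
                (qPoch q q (N + 1 - r) * qPoch (q ^ 3) q (N + 1 + r)))
            + q ^ ((m + 1) * (m + 2)) /
                ((1 - q ^ 2) * qPoch q q (N - m) * qPoch (q ^ 3) q (N + 1 + m)) := by
      intro m
      induction m with
      | zero =>
        intro _
        have hA := qPoch_q_ne q hq N
        have hB := qPoch_q3_ne q hq N
        have hU : (1 : ℂ) - q * q ^ N ≠ 0 := by
          have h : (1 : ℂ) - q * q ^ N = 1 - q ^ (N + 1) := by ring
          rw [h]; exact one_sub_ne q hq N
        have hV : (1 : ℂ) - q ^ 3 * q ^ N ≠ 0 := by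
          have h : (1 : ℂ) - q ^ 3 * q ^ N = 1 - q ^ (N + 2 + 1) := by ring
          rw [h]; exact one_sub_ne q hq (N + 2)
        have hrel : (1 : ℂ) - q ^ 3 * q ^ N = (1 - q ^ 2) + q ^ 2 * (1 - q * q ^ N) := by ring
        rw [Finset.sum_range_one]
        simp only [Nat.sub_zero, Nat.add_zero]
        rw [qPoch_shift q N, qPoch_succ q q N, qPoch_succ (q ^ 3) q N]
        linear_combination cert (qPoch q q N) (qPoch (q ^ 3) q N) (1 - q ^ 2)
          (1 - q * q ^ N) (1 - q ^ 3 * q ^ N) 1 (q ^ 2) hA hB h2 hU hV hrel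
      | succ m ih =>
        intro hm
        have hm' : m ≤ N := Nat.le_of_succ_le hm
        obtain ⟨k, hk⟩ : ∃ k, N - m = k + 1 := ⟨N - (m + 1), by omega⟩
        have hk2 : N - (m + 1) = k := by omega
        have hk3 : N + 1 - (m + 1) = k + 1 := by omega
        have hk5 : N + 1 + (m + 1) = (N + 1 + m) + 1 := by omega
        have hpow : q ^ (N + 1 + m) = q ^ (2 * m + k + 2) := by
          rw [show N + 1 + m = 2 * m + k + 2 from by omega]
        have hA := qPoch_q_ne q hq k
        have hB := qPoch_q3_ne q hq (N + 1 + m)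
        have hU : (1 : ℂ) - q * q ^ k ≠ 0 := by
          have h : (1 : ℂ) - q * q ^ k = 1 - q ^ (k + 1) := by ring
          rw [h]; exact one_sub_ne q hq k
        have hV : (1 : ℂ) - q ^ 3 * q ^ (N + 1 + m) ≠ 0 := by
          have h : (1 : ℂ) - q ^ 3 * q ^ (N + 1 + m) = 1 - q ^ (N + 1 + m + 2 + 1) := by ring
          rw [h]; exact one_sub_ne q hq (N + 1 + m + 2)
        have hrel : (1 : ℂ) - q ^ 3 * q ^ (N + 1 + m)
            = (1 - q ^ (2 * (m + 1) + 2)) + q ^ (2 * (m + 1) + 2) * (1 - q * q ^ k) := by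
          rw [hpow]; ring
        rw [Finset.sum_range_succ, ih hm', hk, hk2, hk3, hk5, qPoch_succ q q k,
          qPoch_succ (q ^ 3) q (N + 1 + m)]
        linear_combination cert (qPoch q q k) (qPoch (q ^ 3) q (N + 1 + m)) (1 - q ^ 2)
          (1 - q * q ^ k) (1 - q ^ 3 * q ^ (N + 1 + m)) (q ^ ((m + 1) * (m + 2)))
          (q ^ (2 * (m + 1) + 2)) hA hB h2 hU hV hrel
    rw [Finset.sum_range_succ, key N le_rfl]
    congr 1
    have e1 : N + 1 - (N + 1) = 0 := by omega
    have e2 : N - N = 0 := by omega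
    have e3 : N + 1 + (N + 1) = (N + 1 + N) + 1 := by omega
    rw [e1, e2, e3, qPoch_succ (q ^ 3) q (N + 1 + N)]
    have hz : qPoch q q 0 = 1 := by simp [qPoch]
    have hB := qPoch_q3_ne q hq (N + 1 + N)
    have hV : (1 : ℂ) - q ^ 3 * q ^ (N + 1 + N) ≠ 0 := by
      have h : (1 : ℂ) - q ^ 3 * q ^ (N + 1 + N) = 1 - q ^ (N + 1 + N + 2 + 1) := by ring
      rw [h]; exact one_sub_ne q hq (N + 1 + N + 2)
    rw [hz, div_div, div_eq_div_iff (by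
        exact mul_ne_zero (mul_ne_zero h2 one_ne_zero) hB) (by
        exact mul_ne_zero h2 (mul_ne_zero one_ne_zero (mul_ne_zero hB hV)))]
    have hw : q ^ (2 * (N + 1) + 2) = q ^ 3 * q ^ (N + 1 + N) := by
      rw [show 2 * (N + 1) + 2 = 3 + (N + 1 + N) from by omega, pow_add]
    rw [hw]
    ring
end

section
/- For |q|<1, Gauss' identity holds: (-q;q)_∞^2 (q;q)_∞ = (q^2;q^2)_∞/(q;q^2)_∞ = ∑_{n≥0} q^{n(n+1)/2}. -/
open scoped BigOperators

namespace Gauss19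

open Filter Finset Complex Topology

lemma factor_norm_lt {a q : ℂ} (ha : ‖a‖ < 1) (hq : ‖q‖ < 1) (j : ℕ) : ‖a * q ^ j‖ < 1 := by
  rw [norm_mul, norm_pow]
  calc ‖a‖ * ‖q‖ ^ j ≤ ‖a‖ * 1 := by
        exact mul_le_mul_of_nonneg_left (pow_le_one₀ (norm_nonneg q) hq.le) (norm_nonneg a)
    _ < 1 := by simpa using ha

lemma factor_ne {a q : ℂ} (ha : ‖a‖ < 1) (hq : ‖q‖ < 1) (j : ℕ) : 1 - a * q ^ j ≠ 0 := by
  intro h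
  rw [sub_eq_zero] at h
  have := factor_norm_lt ha hq j
  rw [← h] at this
  simp at this

lemma log_summable {a q : ℂ} (ha : ‖a‖ < 1) (hq : ‖q‖ < 1) :
    Summable fun j : ℕ => Complex.log (1 - a * q ^ j) := by
  apply Summable.of_norm_bounded (g := fun j => (‖a‖ * (1 - ‖a‖)⁻¹ / 2 + 1) * (‖a‖ * ‖q‖ ^ j))
    (((summable_geometric_of_lt_one (norm_nonneg q) hq).mul_left ‖a‖).mul_left _)
  intro j
  have hj : ‖-(a * q ^ j)‖ < 1 := by rw [norm_neg]; exact factor_norm_lt ha hq j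
  have h := Complex.norm_log_one_add_le hj
  rw [show (1 : ℂ) + -(a * q ^ j) = 1 - a * q ^ j by ring] at h
  refine h.trans ?_
  rw [norm_neg, norm_mul, norm_pow]
  set r := ‖a‖ * ‖q‖ ^ j with hr
  have hr0 : 0 ≤ r := by positivity
  have hra : r ≤ ‖a‖ := by
    calc r ≤ ‖a‖ * 1 := mul_le_mul_of_nonneg_left (pow_le_one₀ (norm_nonneg q) hq.le) (norm_nonneg a)
      _ = ‖a‖ := mul_one _
  have h1 : (1 - r)⁻¹ ≤ (1 - ‖a‖)⁻¹ := by
    apply inv_anti₀ (by linarith) (by linarith)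
  have hinv0 : (0:ℝ) ≤ (1 - r)⁻¹ := inv_nonneg.mpr (by linarith)
  have key : r * (1 - r)⁻¹ ≤ ‖a‖ * (1 - ‖a‖)⁻¹ := mul_le_mul hra h1 hinv0 (norm_nonneg a)
  nlinarith [mul_le_mul_of_nonneg_left key hr0, hr0, sq_nonneg r]

lemma hasProd_poch {a q : ℂ} (ha : ‖a‖ < 1) (hq : ‖q‖ < 1) :
    HasProd (fun j : ℕ => 1 - a * q ^ j) (qPochInf a q) :=
  (Complex.hasProd_of_hasSum_log (fun j => factor_ne ha hq j)
    (log_summable ha hq).hasSum).multipliable.hasProd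

lemma tendsto_qPoch {a q : ℂ} (ha : ‖a‖ < 1) (hq : ‖q‖ < 1) :
    Tendsto (fun n => qPoch a q n) atTop (𝓝 (qPochInf a q)) :=
  (hasProd_poch ha hq).tendsto_prod_nat

lemma qPochInf_ne_zero {a q : ℂ} (ha : ‖a‖ < 1) (hq : ‖q‖ < 1) : qPochInf a q ≠ 0 := by
  have h2 : Complex.exp (∑' j : ℕ, Complex.log (1 - a * q ^ j)) = ∏' j : ℕ, (1 - a * q ^ j) :=
    Complex.cexp_tsum_eq_tprod (fun j => factor_ne ha hq j) (log_summable ha hq)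
  rw [qPochInf, ← h2]
  exact Complex.exp_ne_zero _

lemma qPoch_succ (a q : ℂ) (n : ℕ) : qPoch a q (n + 1) = qPoch a q n * (1 - a * q ^ n) :=
  Finset.prod_range_succ _ _

lemma qPoch_ne_zero {a q : ℂ} (ha : ‖a‖ < 1) (hq : ‖q‖ < 1) (n : ℕ) : qPoch a q n ≠ 0 :=
  Finset.prod_ne_zero_iff.mpr fun j _ => factor_ne ha hq j

/-- Gaussian binomial coefficient with parameter `q`. -/
noncomputable def qb (q : ℂ) (m : ℕ) (r : ℤ) : ℂ :=
  if 0 ≤ r ∧ r ≤ (m : ℤ) then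
    qPoch q q m / (qPoch q q r.toNat * qPoch q q (m - r.toNat)) else 0

lemma qb_of_neg {q : ℂ} {m : ℕ} {r : ℤ} (h : r < 0) : qb q m r = 0 := if_neg (by omega)

lemma qb_of_gt {q : ℂ} {m : ℕ} {r : ℤ} (h : (m : ℤ) < r) : qb q m r = 0 := if_neg (by omega)

lemma qb_cast {q : ℂ} {m s : ℕ} (h : s ≤ m) :
    qb q m (s : ℤ) = qPoch q q m / (qPoch q q s * qPoch q q (m - s)) := by
  rw [qb, if_pos ⟨Int.natCast_nonneg s, by exact_mod_cast h⟩, Int.toNat_natCast]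

lemma qb_zero {q : ℂ} (hq : ‖q‖ < 1) (m : ℕ) : qb q m 0 = 1 := by
  have h0 := qb_cast (q := q) (Nat.zero_le m)
  simp only [Nat.cast_zero] at h0
  rw [h0, Nat.sub_zero]
  rw [show qPoch q q 0 = 1 from Finset.prod_range_zero _, one_mul]
  exact div_self (qPoch_ne_zero hq hq m)

lemma qb_self {q : ℂ} (hq : ‖q‖ < 1) (m : ℕ) : qb q m (m : ℤ) = 1 := by
  rw [qb_cast le_rfl, Nat.sub_self]
  rw [show qPoch q q 0 = 1 from Finset.prod_range_zero _, mul_one]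
  exact div_self (qPoch_ne_zero hq hq m)

lemma pascalA {q : ℂ} (hq : ‖q‖ < 1) (hq0 : q ≠ 0) (m : ℕ) (r : ℤ) :
    qb q (m + 1) r = qb q m r + q ^ ((m : ℤ) + 1 - r) * qb q m (r - 1) := by
  rcases lt_or_ge r 0 with h | h
  · rw [qb_of_neg h, qb_of_neg h, qb_of_neg (by omega), mul_zero, add_zero]
  rcases eq_or_lt_of_le h with h0 | hpos
  · rw [← h0, qb_zero hq, qb_zero hq, qb_of_neg (by omega), mul_zero, add_zero]
  rcases lt_or_ge (m : ℤ) r with hgt | hle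
  · rcases eq_or_lt_of_le (by omega : (m : ℤ) + 1 ≤ r) with he | hgt2
    · have h1 : r = ((m + 1 : ℕ) : ℤ) := by push_cast; omega
      rw [h1, qb_self hq, qb_of_gt (by push_cast; omega),
        show ((m + 1 : ℕ) : ℤ) - 1 = (m : ℤ) by push_cast; ring, qb_self hq,
        show (m : ℤ) + 1 - ((m + 1 : ℕ) : ℤ) = 0 by push_cast; ring]
      norm_num
    · rw [qb_of_gt (by omega), qb_of_gt (by omega : (m : ℤ) < r),
        qb_of_gt (by omega : (m : ℤ) < r - 1), mul_zero, add_zero]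
  · obtain ⟨s, rfl⟩ : ∃ s : ℕ, r = ((s : ℕ) : ℤ) + 1 := ⟨(r - 1).toNat, by omega⟩
    obtain ⟨j, rfl⟩ : ∃ j : ℕ, m = s + 1 + j := ⟨m - (s + 1), by omega⟩
    have e1 : ((s : ℤ) + 1) = ((s + 1 : ℕ) : ℤ) := by push_cast; ring
    have e2 : ((s : ℤ) + 1) - 1 = ((s : ℕ) : ℤ) := by push_cast; ring
    have e3 : ((s + 1 + j : ℕ) : ℤ) + 1 - ((s : ℤ) + 1) = ((j + 1 : ℕ) : ℤ) := by
      push_cast; ring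
    rw [e2, e3, zpow_natCast, e1, qb_cast (by omega), qb_cast (by omega), qb_cast (by omega),
      show s + 1 + j + 1 - (s + 1) = j + 1 by omega, show s + 1 + j - (s + 1) = j by omega,
      show s + 1 + j - s = j + 1 by omega,
      qPoch_succ q q (s + 1 + j), qPoch_succ q q s, qPoch_succ q q j]
    have h1 := qPoch_ne_zero hq hq s
    have h2 := qPoch_ne_zero hq hq j
    have h3 := factor_ne hq hq s
    have h4 := factor_ne hq hq j
    field_simp
    ring

lemma pascalB {q : ℂ} (hq : ‖q‖ < 1) (hq0 : q ≠ 0) (m : ℕ) (r : ℤ) :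
    qb q (m + 1) r = qb q m (r - 1) + q ^ r * qb q m r := by
  rcases lt_or_ge r 0 with h | h
  · rw [qb_of_neg h, qb_of_neg h, qb_of_neg (by omega), mul_zero, add_zero]
  rcases eq_or_lt_of_le h with h0 | hpos
  · rw [← h0, qb_zero hq (m + 1), qb_of_neg (by omega : (0:ℤ) - 1 < 0), qb_zero hq m]
    norm_num
  rcases lt_or_ge (m : ℤ) r with hgt | hle
  · rcases eq_or_lt_of_le (by omega : (m : ℤ) + 1 ≤ r) with he | hgt2
    · have h1 : r = ((m + 1 : ℕ) : ℤ) := by push_cast; omega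
      rw [h1, qb_self hq,
        show ((m + 1 : ℕ) : ℤ) - 1 = (m : ℤ) by push_cast; ring, qb_self hq,
        qb_of_gt (by push_cast; omega : (m : ℤ) < ((m + 1 : ℕ) : ℤ))]
      norm_num
    · rw [qb_of_gt (by omega), qb_of_gt (by omega : (m : ℤ) < r),
        qb_of_gt (by omega : (m : ℤ) < r - 1), mul_zero, add_zero]
  · obtain ⟨s, rfl⟩ : ∃ s : ℕ, r = ((s : ℕ) : ℤ) + 1 := ⟨(r - 1).toNat, by omega⟩
    obtain ⟨j, rfl⟩ : ∃ j : ℕ, m = s + 1 + j := ⟨m - (s + 1), by omega⟩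
    have e1 : ((s : ℤ) + 1) = ((s + 1 : ℕ) : ℤ) := by push_cast; ring
    have e2 : ((s : ℤ) + 1) - 1 = ((s : ℕ) : ℤ) := by push_cast; ring
    rw [e2, e1, zpow_natCast, qb_cast (by omega), qb_cast (by omega), qb_cast (by omega),
      show s + 1 + j + 1 - (s + 1) = j + 1 by omega, show s + 1 + j - (s + 1) = j by omega,
      show s + 1 + j - s = j + 1 by omega,
      qPoch_succ q q (s + 1 + j), qPoch_succ q q s, qPoch_succ q q j]
    have h1 := qPoch_ne_zero hq hq s
    have h2 := qPoch_ne_zero hq hq j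
    have h3 := factor_ne hq hq s
    have h4 := factor_ne hq hq j
    field_simp
    ring

lemma pascal2 {q : ℂ} (hq : ‖q‖ < 1) (hq0 : q ≠ 0) (m : ℕ) (r : ℤ) :
    qb q (m + 2) r = (1 + q ^ (m + 1)) * qb q m (r - 1) + q ^ r * qb q m r
      + q ^ ((m : ℤ) + 2 - r) * qb q m (r - 2) := by
  rw [show m + 2 = (m + 1) + 1 by ring, pascalA hq hq0 (m + 1) r, pascalB hq hq0 m r,
    pascalB hq hq0 m (r - 1),
    show r - 1 - 1 = r - 2 by ring,
    show ((m + 1 : ℕ) : ℤ) + 1 - r = (m : ℤ) + 2 - r by push_cast; ring]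
  have hz : q ^ ((m : ℤ) + 2 - r) * q ^ (r - 1) = q ^ (m + 1 : ℕ) := by
    rw [← zpow_natCast q (m + 1), ← zpow_add₀ hq0]
    congr 1
    push_cast
    ring
  linear_combination qb q m (r - 1) * hz


def tri (k : ℤ) : ℤ := k * (k + 1) / 2

lemma tri_succ (k : ℤ) : tri (k + 1) = tri k + (k + 1) := by
  unfold tri
  rw [show (k + 1) * (k + 1 + 1) = k * (k + 1) + (k + 1) * 2 by ring,
    Int.add_mul_ediv_right _ _ two_ne_zero]

lemma tri_pred (k : ℤ) : tri (k - 1) = tri k - k := by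
  unfold tri
  rw [show (k - 1) * (k - 1 + 1) = k * (k + 1) + (-k) * 2 by ring,
    Int.add_mul_ediv_right _ _ two_ne_zero]
  ring

lemma tri_nonneg (k : ℤ) : 0 ≤ tri k := by
  unfold tri
  apply Int.ediv_nonneg _ (by norm_num)
  rcases le_or_gt 0 k with h | h
  · exact mul_nonneg h (by omega)
  · nlinarith [mul_nonneg (by omega : (0:ℤ) ≤ -k) (by omega : (0:ℤ) ≤ -(k + 1))]

lemma finid {q : ℂ} (hq : ‖q‖ < 1) (hq0 : q ≠ 0) (N : ℕ) :
    ∏ j ∈ Finset.range N, ((1 + q ^ j) * (1 + q ^ (j + 1))) =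
      ∑ k ∈ Finset.Icc (-(N : ℤ)) (N : ℤ), qb q (2 * N) ((N : ℤ) + k) * q ^ tri k := by
  induction N with
  | zero =>
    simp only [Finset.prod_range_zero, Nat.cast_zero, neg_zero, Finset.Icc_self,
      Finset.sum_singleton, mul_zero, zero_add]
    rw [show tri 0 = 0 by decide, zpow_zero, mul_one, qb_zero hq]
  | succ N ih =>
    rw [Finset.prod_range_succ, ih]
    push_cast
    have key : ∀ k ∈ Finset.Icc (-((N : ℤ) + 1)) ((N : ℤ) + 1),
        qb q (2 * (N + 1)) (((N : ℤ) + 1) + k) * q ^ tri k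
          = (1 + q ^ (2 * N + 1)) * (qb q (2 * N) ((N : ℤ) + k) * q ^ tri k)
            + q ^ ((N : ℤ)) * (qb q (2 * N) ((N : ℤ) + (k + 1)) * q ^ tri (k + 1))
            + q ^ ((N : ℤ) + 1) * (qb q (2 * N) ((N : ℤ) + (k - 1)) * q ^ tri (k - 1)) := by
      intro k _
      rw [show 2 * (N + 1) = 2 * N + 2 by ring, pascal2 hq hq0 (2 * N) (((N : ℤ) + 1) + k),
        show (((N : ℤ) + 1) + k) - 1 = (N : ℤ) + k by ring,
        show (((N : ℤ) + 1) + k) - 2 = (N : ℤ) + (k - 1) by ring,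
        show ((2 * N : ℕ) : ℤ) + 2 - (((N : ℤ) + 1) + k) = (N : ℤ) + 1 - k by push_cast; ring,
        show (N : ℤ) + (k + 1) = ((N : ℤ) + 1) + k by ring]
      have hz2 : q ^ (((N : ℤ) + 1) + k) * q ^ tri k = q ^ ((N : ℤ)) * q ^ tri (k + 1) := by
        rw [← zpow_add₀ hq0, ← zpow_add₀ hq0]
        congr 1
        rw [tri_succ]; ring
      have hz3 : q ^ ((N : ℤ) + 1 - k) * q ^ tri k = q ^ ((N : ℤ) + 1) * q ^ tri (k - 1) := by
        rw [← zpow_add₀ hq0, ← zpow_add₀ hq0]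
        congr 1
        rw [tri_pred]; ring
      rw [show 2 * N + 1 = (2 * N) + 1 by ring]
      linear_combination qb q (2 * N) (((N : ℤ) + 1) + k) * hz2
        + qb q (2 * N) ((N : ℤ) + (k - 1)) * hz3
    rw [Finset.sum_congr rfl key, Finset.sum_add_distrib, Finset.sum_add_distrib,
      ← Finset.mul_sum, ← Finset.mul_sum, ← Finset.mul_sum]
    have hsub : Finset.Icc (-(N : ℤ)) (N : ℤ) ⊆ Finset.Icc (-((N : ℤ) + 1)) ((N : ℤ) + 1) :=
      Finset.Icc_subset_Icc (by omega) (by omega)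
    have hvan : ∀ k : ℤ, k ∈ Finset.Icc (-((N : ℤ) + 1)) ((N : ℤ) + 1) →
        k ∉ Finset.Icc (-(N : ℤ)) (N : ℤ) →
        qb q (2 * N) ((N : ℤ) + k) * q ^ tri k = 0 := by
      intro k hk hnk
      simp only [Finset.mem_Icc, not_and, not_le] at hk hnk
      rcases lt_or_ge k (-(N : ℤ)) with h | h
      · rw [qb_of_neg (by omega), zero_mul]
      · rw [qb_of_gt (by push_cast; omega), zero_mul]
    have hS1 : ∑ k ∈ Finset.Icc (-((N : ℤ) + 1)) ((N : ℤ) + 1),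
        qb q (2 * N) ((N : ℤ) + k) * q ^ tri k
        = ∑ k ∈ Finset.Icc (-(N : ℤ)) (N : ℤ), qb q (2 * N) ((N : ℤ) + k) * q ^ tri k :=
      (Finset.sum_subset hsub hvan).symm
    have hS2 : ∑ k ∈ Finset.Icc (-((N : ℤ) + 1)) ((N : ℤ) + 1),
        qb q (2 * N) ((N : ℤ) + (k + 1)) * q ^ tri (k + 1)
        = ∑ k ∈ Finset.Icc (-(N : ℤ)) (N : ℤ), qb q (2 * N) ((N : ℤ) + k) * q ^ tri k := by
      have h1 : ∑ k ∈ Finset.Icc (-((N : ℤ) + 1)) ((N : ℤ) + 1),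
          qb q (2 * N) ((N : ℤ) + (k + 1)) * q ^ tri (k + 1)
          = ∑ k ∈ Finset.Icc (-(N : ℤ)) ((N : ℤ) + 2),
            qb q (2 * N) ((N : ℤ) + k) * q ^ tri k := by
        apply Finset.sum_nbij' (fun k => k + 1) (fun k => k - 1)
        · intro a ha; simp only [Finset.mem_Icc] at *; omega
        · intro a ha; simp only [Finset.mem_Icc] at *; omega
        · intro a _; ring
        · intro a _; ring
        · intro a _; rfl
      rw [h1]
      symm
      apply Finset.sum_subset (Finset.Icc_subset_Icc (by omega) (by omega))
      intro k hk hnk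
      simp only [Finset.mem_Icc, not_and, not_le] at hk hnk
      rw [qb_of_gt (by push_cast; omega), zero_mul]
    have hS3 : ∑ k ∈ Finset.Icc (-((N : ℤ) + 1)) ((N : ℤ) + 1),
        qb q (2 * N) ((N : ℤ) + (k - 1)) * q ^ tri (k - 1)
        = ∑ k ∈ Finset.Icc (-(N : ℤ)) (N : ℤ), qb q (2 * N) ((N : ℤ) + k) * q ^ tri k := by
      have h1 : ∑ k ∈ Finset.Icc (-((N : ℤ) + 1)) ((N : ℤ) + 1),
          qb q (2 * N) ((N : ℤ) + (k - 1)) * q ^ tri (k - 1)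
          = ∑ k ∈ Finset.Icc (-((N : ℤ) + 2)) ((N : ℤ)),
            qb q (2 * N) ((N : ℤ) + k) * q ^ tri k := by
        apply Finset.sum_nbij' (fun k => k - 1) (fun k => k + 1)
        · intro a ha; simp only [Finset.mem_Icc] at *; omega
        · intro a ha; simp only [Finset.mem_Icc] at *; omega
        · intro a _; ring
        · intro a _; ring
        · intro a _; rfl
      rw [h1]
      symm
      apply Finset.sum_subset (Finset.Icc_subset_Icc (by omega) (by omega))
      intro k hk hnk
      simp only [Finset.mem_Icc, not_and, not_le] at hk hnk
      rw [qb_of_neg (by omega), zero_mul]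
    rw [hS1, hS2, hS3]
    generalize (∑ k ∈ Finset.Icc (-(N : ℤ)) (N : ℤ),
      qb q (2 * N) ((N : ℤ) + k) * q ^ tri k) = T
    rw [show q ^ ((N : ℤ)) = q ^ (N : ℕ) from zpow_natCast q N,
      show q ^ ((N : ℤ) + 1) = q ^ ((N + 1 : ℕ)) by
        rw [show (N : ℤ) + 1 = ((N + 1 : ℕ) : ℤ) by push_cast; ring, zpow_natCast]]
    ring


lemma fin_split (q : ℂ) (N : ℕ) :
    qPoch q q (2 * N) = qPoch q (q ^ 2) N * qPoch (q ^ 2) (q ^ 2) N := by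
  induction N with
  | zero => simp [qPoch]
  | succ N ih =>
    rw [show 2 * (N + 1) = (2 * N + 1) + 1 by ring, qPoch_succ, qPoch_succ, ih,
      qPoch_succ, qPoch_succ]
    ring

lemma eq_DC {q : ℂ} (hq : ‖q‖ < 1) :
    qPochInf q q = qPochInf q (q ^ 2) * qPochInf (q ^ 2) (q ^ 2) := by
  have hq2 : ‖q ^ 2‖ < 1 := by rw [norm_pow]; nlinarith [norm_nonneg q]
  have h1 : Tendsto (fun N => qPoch q q (2 * N)) atTop (𝓝 (qPochInf q q)) :=
    (tendsto_qPoch hq hq).comp (tendsto_atTop_atTop.mpr fun b => ⟨b, fun a ha => by omega⟩)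
  have h2 := (tendsto_qPoch hq hq2).mul (tendsto_qPoch hq2 hq2)
  exact tendsto_nhds_unique (h1.congr (fun N => fin_split q N)) h2

lemma eq_AB {q : ℂ} (hq : ‖q‖ < 1) :
    qPochInf (-q) q * qPochInf q q = qPochInf (q ^ 2) (q ^ 2) := by
  have hq2 : ‖q ^ 2‖ < 1 := by rw [norm_pow]; nlinarith [norm_nonneg q]
  have hn : ‖-q‖ < 1 := by rwa [norm_neg]
  have fin : ∀ N, qPoch (-q) q N * qPoch q q N = qPoch (q ^ 2) (q ^ 2) N := by
    intro N
    rw [qPoch, qPoch, qPoch, ← Finset.prod_mul_distrib]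
    exact Finset.prod_congr rfl fun j _ => by ring
  exact tendsto_nhds_unique (((tendsto_qPoch hn hq).mul (tendsto_qPoch hq hq)).congr fin)
    (tendsto_qPoch hq2 hq2)

lemma qPoch_norm_le {q : ℂ} (hq : ‖q‖ < 1) (m : ℕ) :
    ‖qPoch q q m‖ ≤ Real.exp ((1 - ‖q‖)⁻¹) := by
  rw [qPoch]
  refine (Finset.norm_prod_le _ _).trans ?_
  have h1 : ∏ j ∈ Finset.range m, ‖1 - q * q ^ j‖ ≤ ∏ j ∈ Finset.range m, Real.exp (‖q‖ ^ j) := by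
    apply Finset.prod_le_prod (fun j _ => norm_nonneg _)
    intro j _
    have h2 : ‖1 - q * q ^ j‖ ≤ 1 + ‖q‖ * ‖q‖ ^ j := by
      refine (norm_sub_le _ _).trans ?_
      simp [norm_mul, norm_pow]
    have h3 : ‖q‖ * ‖q‖ ^ j ≤ ‖q‖ ^ j :=
      (mul_le_mul_of_nonneg_right hq.le (pow_nonneg (norm_nonneg q) j)).trans_eq (one_mul _)
    have h4 := Real.add_one_le_exp (‖q‖ ^ j)
    linarith
  refine h1.trans ?_
  rw [← Real.exp_sum]
  apply Real.exp_le_exp.mpr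
  calc (∑ j ∈ Finset.range m, ‖q‖ ^ j) ≤ ∑' j : ℕ, ‖q‖ ^ j :=
        Summable.sum_le_tsum _ (fun i _ => by positivity)
          (summable_geometric_of_lt_one (norm_nonneg q) hq)
    _ = (1 - ‖q‖)⁻¹ := tsum_geometric_of_lt_one (norm_nonneg q) hq

lemma qPoch_norm_lb {q : ℂ} (hq : ‖q‖ < 1) :
    ∃ c : ℝ, 0 < c ∧ ∀ m, c ≤ ‖qPoch q q m‖ := by
  have hBne := qPochInf_ne_zero hq hq
  have hBpos : 0 < ‖qPochInf q q‖ := norm_pos_iff.mpr hBne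
  have ht : Tendsto (fun m => ‖qPoch q q m‖) atTop (𝓝 ‖qPochInf q q‖) :=
    (tendsto_qPoch hq hq).norm
  have hev : ∀ᶠ m in atTop, ‖qPochInf q q‖ / 2 ≤ ‖qPoch q q m‖ :=
    ht.eventually (eventually_ge_nhds (by linarith))
  rw [eventually_atTop] at hev
  obtain ⟨M, hM⟩ := hev
  set F : Finset ℝ := insert (‖qPochInf q q‖ / 2)
    ((Finset.range M).image fun m => ‖qPoch q q m‖) with hF
  have hFne : F.Nonempty := Finset.insert_nonempty _ _
  refine ⟨F.min' hFne, ?_, ?_⟩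
  · rw [Finset.lt_min'_iff]
    intro y hy
    rw [hF, Finset.mem_insert] at hy
    rcases hy with rfl | hy
    · linarith
    · obtain ⟨m, _, rfl⟩ := Finset.mem_image.mp hy
      exact norm_pos_iff.mpr (qPoch_ne_zero hq hq m)
  · intro m
    rcases lt_or_ge m M with h | h
    · have hmem : ‖qPoch q q m‖ ∈ F := by
        rw [hF]
        exact Finset.mem_insert_of_mem
          (Finset.mem_image.mpr ⟨m, Finset.mem_range.mpr h, rfl⟩)
      exact Finset.min'_le _ _ hmem
    · have hmem : ‖qPochInf q q‖ / 2 ∈ F := by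
        rw [hF]
        exact Finset.mem_insert_self _ _
      exact le_trans (Finset.min'_le _ _ hmem) (hM m h)

lemma qb_norm_le {q : ℂ} (hq : ‖q‖ < 1) :
    ∃ K : ℝ, 0 ≤ K ∧ ∀ m r, ‖qb q m r‖ ≤ K := by
  obtain ⟨c, hc0, hc⟩ := qPoch_norm_lb hq
  refine ⟨Real.exp ((1 - ‖q‖)⁻¹) / (c * c), by positivity, ?_⟩
  intro m r
  rw [qb]
  split_ifs with h
  · rw [norm_div, norm_mul]
    exact div_le_div₀ (Real.exp_pos _).le (qPoch_norm_le hq m) (by positivity)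
      (mul_le_mul (hc _) (hc _) hc0.le (norm_nonneg _))
  · rw [norm_zero]; positivity

lemma tri_toNat_nat (n : ℕ) : (tri (n : ℤ)).toNat = n * (n + 1) / 2 := by
  unfold tri
  have h : (n : ℤ) * ((n : ℤ) + 1) = ((n * (n + 1) : ℕ) : ℤ) := by push_cast; ring
  rw [h]
  generalize n * (n + 1) = m
  omega

lemma tri_toNat_neg (n : ℕ) : (tri (-((n : ℤ) + 1))).toNat = n * (n + 1) / 2 := by
  unfold tri
  have h : (-((n : ℤ) + 1)) * (-((n : ℤ) + 1) + 1) = ((n * (n + 1) : ℕ) : ℤ) := by push_cast; ring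
  rw [h]
  generalize n * (n + 1) = m
  omega

lemma le_tri_nat (n : ℕ) : n ≤ (tri (n : ℤ)).toNat := by
  rw [tri_toNat_nat]
  have h : 2 * n ≤ n * (n + 1) := by
    rcases Nat.eq_zero_or_pos n with rfl | hp
    · simp
    · nlinarith
  omega

lemma le_tri_negnat (n : ℕ) : n - 1 ≤ (tri (-(n : ℤ))).toNat := by
  cases n with
  | zero => simp
  | succ n =>
    have h : (-((n + 1 : ℕ) : ℤ)) = -((n : ℤ) + 1) := by push_cast; ring
    rw [h, tri_toNat_neg]
    have h2 : 2 * n ≤ n * (n + 1) := by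
      rcases Nat.eq_zero_or_pos n with rfl | hp
      · simp
      · nlinarith
    omega


set_option maxHeartbeats 1000000 in
lemma gauss_main {q : ℂ} (hq : ‖q‖ < 1) (hq0 : q ≠ 0) :
    qPochInf (-q) q * qPochInf (-q) q * qPochInf q q = ∑' n : ℕ, q ^ (n * (n + 1) / 2) := by
  have hn : ‖-q‖ < 1 := by rwa [norm_neg]
  have hBne : qPochInf q q ≠ 0 := qPochInf_ne_zero hq hq
  -- LHS limit
  have hAfin : ∀ N, qPoch (-q) q N = ∏ j ∈ Finset.range N, (1 + q ^ (j + 1)) := by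
    intro N
    exact Finset.prod_congr rfl fun j _ => by ring
  have htA : Tendsto (fun N => ∏ j ∈ Finset.range N, (1 + q ^ (j + 1))) atTop
      (𝓝 (qPochInf (-q) q)) := (tendsto_qPoch hn hq).congr hAfin
  have htA2 : Tendsto (fun N => ∏ j ∈ Finset.range N, (1 + q ^ j)) atTop
      (𝓝 (2 * qPochInf (-q) q)) := by
    rw [← tendsto_add_atTop_iff_nat 1]
    have he : ∀ N, (∏ j ∈ Finset.range (N + 1), (1 + q ^ j))
        = 2 * ∏ j ∈ Finset.range N, (1 + q ^ (j + 1)) := by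
      intro N
      rw [Finset.prod_range_succ']
      norm_num [mul_comm]
    exact (htA.const_mul 2).congr (fun N => (he N).symm)
  have htL : Tendsto (fun N => ∏ j ∈ Finset.range N, ((1 + q ^ j) * (1 + q ^ (j + 1)))) atTop
      (𝓝 (2 * qPochInf (-q) q * qPochInf (-q) q)) := by
    have h := htA2.mul htA
    have he : ∀ N, (∏ j ∈ Finset.range N, (1 + q ^ j)) * ∏ j ∈ Finset.range N, (1 + q ^ (j + 1))
        = ∏ j ∈ Finset.range N, ((1 + q ^ j) * (1 + q ^ (j + 1))) := fun N =>
      (Finset.prod_mul_distrib).symm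
    exact (Tendsto.congr he h)
  -- summability of the bound
  obtain ⟨K, hK0, hK⟩ := qb_norm_le hq
  have hw0 : 0 < ‖q‖ := norm_pos_iff.mpr hq0
  have hgeo : Summable (fun n : ℕ => ‖q‖ ^ n) := summable_geometric_of_lt_one (norm_nonneg q) hq
  have hboundsum : Summable (fun k : ℤ => K * ‖q‖ ^ (tri k).toNat) := by
    apply Summable.of_nat_of_neg
    · apply Summable.of_nonneg_of_le (fun n => by positivity) (fun n => ?_) (hgeo.mul_left K)
      exact mul_le_mul_of_nonneg_left
        (pow_le_pow_of_le_one hw0.le hq.le (le_tri_nat n)) hK0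
    · apply Summable.of_nonneg_of_le (fun n => by positivity) (fun n => ?_)
        (hgeo.mul_left (K * ‖q‖⁻¹))
      have h1 : ‖q‖ ^ (tri (-(n : ℤ))).toNat ≤ ‖q‖ ^ (n - 1) :=
        pow_le_pow_of_le_one hw0.le hq.le (le_tri_negnat n)
      have h2 : ‖q‖ ^ (n - 1) ≤ ‖q‖⁻¹ * ‖q‖ ^ n := by
        cases n with
        | zero =>
          simp only [Nat.zero_sub, pow_zero, mul_one]
          calc (1 : ℝ) = ‖q‖ * ‖q‖⁻¹ := (mul_inv_cancel₀ (ne_of_gt hw0)).symm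
            _ ≤ 1 * ‖q‖⁻¹ := by
                apply mul_le_mul_of_nonneg_right hq.le (inv_nonneg.mpr (norm_nonneg q))
            _ = ‖q‖⁻¹ := one_mul _
        | succ n =>
          rw [Nat.succ_sub_one, pow_succ']
          apply le_of_eq
          rw [← mul_assoc, inv_mul_cancel₀ (ne_of_gt hw0), one_mul]
      calc K * ‖q‖ ^ (tri (-(n : ℤ))).toNat ≤ K * (‖q‖⁻¹ * ‖q‖ ^ n) :=
            mul_le_mul_of_nonneg_left (h1.trans h2) hK0
        _ = K * ‖q‖⁻¹ * ‖q‖ ^ n := by ring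
  -- pointwise limits of the Gaussian binomials
  have h2N : Tendsto (fun N : ℕ => 2 * N) atTop atTop :=
    tendsto_atTop_atTop.mpr fun b => ⟨b, fun a ha => by omega⟩
  have hqblim : ∀ k : ℤ, Tendsto (fun N => qb q (2 * N) ((N : ℤ) + k)) atTop
      (𝓝 (qPochInf q q)⁻¹) := by
    intro k
    have hu : Tendsto (fun N : ℕ => ((N : ℤ) + k).toNat) atTop atTop :=
      tendsto_atTop_atTop.mpr fun b => ⟨b + k.natAbs, fun a ha => by omega⟩
    have hv : Tendsto (fun N : ℕ => 2 * N - ((N : ℤ) + k).toNat) atTop atTop :=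
      tendsto_atTop_atTop.mpr fun b => ⟨b + k.natAbs, fun a ha => by omega⟩
    have hd : Tendsto (fun N => qPoch q q (2 * N) /
        (qPoch q q ((N : ℤ) + k).toNat * qPoch q q (2 * N - ((N : ℤ) + k).toNat))) atTop
        (𝓝 (qPochInf q q / (qPochInf q q * qPochInf q q))) :=
      ((tendsto_qPoch hq hq).comp h2N).div
        (((tendsto_qPoch hq hq).comp hu).mul ((tendsto_qPoch hq hq).comp hv))
        (mul_ne_zero hBne hBne)
    rw [show qPochInf q q / (qPochInf q q * qPochInf q q) = (qPochInf q q)⁻¹ by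
      field_simp] at hd
    refine Tendsto.congr' ?_ hd
    rw [EventuallyEq, eventually_atTop]
    refine ⟨k.natAbs, fun N hN => ?_⟩
    rw [qb, if_pos ⟨by omega, by push_cast; omega⟩]
  -- dominated convergence
  have hzn : ∀ k : ℤ, (q : ℂ) ^ tri k = q ^ (tri k).toNat := by
    intro k
    rw [← zpow_natCast q (tri k).toNat, Int.toNat_of_nonneg (tri_nonneg k)]
  have hdom := tendsto_tsum_of_dominated_convergence
    (f := fun (N : ℕ) (k : ℤ) => qb q (2 * N) ((N : ℤ) + k) * q ^ (tri k).toNat)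
    (g := fun k : ℤ => (qPochInf q q)⁻¹ * q ^ (tri k).toNat)
    (bound := fun k : ℤ => K * ‖q‖ ^ (tri k).toNat)
    hboundsum
    (fun k => (hqblim k).mul_const _)
    (Filter.Eventually.of_forall fun N k => by
      rw [norm_mul, norm_pow]
      exact mul_le_mul_of_nonneg_right (hK _ _) (by positivity))
  have hfin : ∀ N : ℕ, (∑' k : ℤ, qb q (2 * N) ((N : ℤ) + k) * q ^ (tri k).toNat)
      = ∏ j ∈ Finset.range N, ((1 + q ^ j) * (1 + q ^ (j + 1))) := by
    intro N
    have hsupp : ∀ k : ℤ, k ∉ Finset.Icc (-(N : ℤ)) (N : ℤ) →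
        qb q (2 * N) ((N : ℤ) + k) * q ^ (tri k).toNat = 0 := by
      intro k hk
      rw [Finset.mem_Icc, not_and_or] at hk
      rcases hk with h | h
      · rw [qb_of_neg (by omega), zero_mul]
      · rw [qb_of_gt (by push_cast; omega), zero_mul]
    rw [tsum_eq_sum hsupp, finid hq hq0 N]
    exact Finset.sum_congr rfl fun k _ => by rw [hzn k]
  have hRlim : Tendsto (fun N => ∏ j ∈ Finset.range N, ((1 + q ^ j) * (1 + q ^ (j + 1)))) atTop
      (𝓝 (∑' k : ℤ, (qPochInf q q)⁻¹ * q ^ (tri k).toNat)) := hdom.congr hfin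
  have hmain := tendsto_nhds_unique htL hRlim
  -- identify the tsum over ℤ
  have hSsum : Summable (fun n : ℕ => q ^ (n * (n + 1) / 2)) := by
    apply Summable.of_norm_bounded hgeo
    intro n
    rw [norm_pow]
    apply pow_le_pow_of_le_one (norm_nonneg q) hq.le
    have h := le_tri_nat n
    rw [tri_toNat_nat] at h
    exact h
  have hsplit : (∑' k : ℤ, (qPochInf q q)⁻¹ * q ^ (tri k).toNat)
      = (qPochInf q q)⁻¹ * ((∑' n : ℕ, q ^ (n * (n + 1) / 2)) + ∑' n : ℕ, q ^ (n * (n + 1) / 2)) := by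
    rw [tsum_mul_left]
    congr 1
    have h1 : Summable (fun n : ℕ => (q : ℂ) ^ (tri ((n : ℤ))).toNat) :=
      hSsum.congr fun n => by rw [tri_toNat_nat]
    have h2 : Summable (fun n : ℕ => (q : ℂ) ^ (tri (-((n : ℤ) + 1))).toNat) :=
      hSsum.congr fun n => by rw [tri_toNat_neg]
    have hkey := tsum_of_nat_of_neg_add_one (f := fun k : ℤ => (q : ℂ) ^ (tri k).toNat) h1 h2
    rw [hkey]
    congr 1
    all_goals first
      | (exact tsum_congr fun n => by
          show (q : ℂ) ^ (tri ((n : ℕ) : ℤ)).toNat = q ^ (n * (n + 1) / 2)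
          rw [tri_toNat_nat])
      | (exact tsum_congr fun n => by
          show (q : ℂ) ^ (tri (-((n : ℤ) + 1))).toNat = q ^ (n * (n + 1) / 2)
          rw [tri_toNat_neg])
  rw [hsplit] at hmain
  rw [inv_mul_eq_div, eq_div_iff hBne] at hmain
  linear_combination hmain / 2

end Gauss19

open Gauss19 in
theorem stmt19 (q : ℂ) (hq : ‖q‖ < 1) :
    qPochInf (-q) q ^ 2 * qPochInf q q = qPochInf (q ^ 2) (q ^ 2) / qPochInf q (q ^ 2) ∧
      qPochInf (q ^ 2) (q ^ 2) / qPochInf q (q ^ 2) = ∑' n : ℕ, q ^ (n * (n + 1) / 2) := by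
  by_cases hq0 : q = 0
  · subst hq0
    have h1 : ∀ a : ℂ, qPochInf a 0 = 1 - a := by
      intro a
      rw [qPochInf, tprod_eq_mulSingle 0]
      · norm_num
      · intro b hb
        rw [zero_pow hb]
        ring
    have hS : (∑' n : ℕ, (0 : ℂ) ^ (n * (n + 1) / 2)) = 1 := by
      rw [tsum_eq_single 0]
      · norm_num
      · intro n hn
        have h2 : n * (n + 1) / 2 ≠ 0 := by
          rcases Nat.exists_eq_succ_of_ne_zero hn with ⟨m, rfl⟩
          show (m + 1) * (m + 1 + 1) / 2 ≠ 0
          have h3 : 2 ≤ (m + 1) * (m + 1 + 1) := by nlinarith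
          omega
        exact zero_pow h2
    norm_num
    rw [h1 0, hS]
    norm_num
  · have hq2 : ‖q ^ 2‖ < 1 := by rw [norm_pow]; nlinarith [norm_nonneg q]
    have hn : ‖-q‖ < 1 := by rwa [norm_neg]
    have hCne : qPochInf (q ^ 2) (q ^ 2) ≠ 0 := qPochInf_ne_zero hq2 hq2
    have hDne : qPochInf q (q ^ 2) ≠ 0 := qPochInf_ne_zero hq hq2
    have e1 := eq_DC hq
    have e2 := eq_AB hq
    have e3 := gauss_main hq hq0
    have hAD : qPochInf (-q) q * qPochInf q (q ^ 2) = 1 := by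
      apply mul_right_cancel₀ hCne
      rw [one_mul]
      rw [e1] at e2
      linear_combination e2
    constructor
    · rw [pow_two, eq_div_iff hDne]
      linear_combination (qPochInf (-q) q * qPochInf q (q ^ 2)) * e2
        + qPochInf (q ^ 2) (q ^ 2) * hAD
    · rw [div_eq_iff hDne]
      linear_combination qPochInf q (q ^ 2) * e3
        - (qPochInf (-q) q * qPochInf q (q ^ 2)) * e2
        - qPochInf (q ^ 2) (q ^ 2) * hAD
end
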